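/- Let G ≤ A₁ × A₂ and let f : G → F be a homomorphism to a free group F with nonabelian image. Then f factors through one of the coordinate projections: either G ∩ ker(p₁) ≤ ker f or G ∩ ker(p₂) ≤ ker f. -/

import Mathlib

namespace FG8

open FreeGroup

variable {β : Type*} [DecidableEq β]


lemma reduce_cons_of (x : β × Bool) (L : List (β × Bool)) (hL : reduce L = L)
    (h : ∀ p ∈ L.head?, ¬(x.1 = p.1 ∧ x.2 = !p.2)) :
    reduce (x :: L) = x :: L := by
  rw [reduce.cons, hL]
  cases L with
  | nil => rfl
  | cons hd tl =>
    have hh := h hd (by simp)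
    simp [hh]

lemma invRev_append_singleton (L : List (β × Bool)) (x : β × Bool) :
    invRev (L ++ [x]) = (x.1, !x.2) :: invRev L := by
  simp [invRev]

lemma reduce_eq_invRev_reduce_invRev (L : List (β × Bool)) :
    reduce L = invRev (reduce (invRev L)) := by
  rw [reduce_invRev, invRev_invRev]

lemma reduce_concat_of (x : β × Bool) (L : List (β × Bool)) (hL : reduce L = L)
    (h : ∀ p ∈ L.getLast?, ¬(p.1 = x.1 ∧ p.2 = !x.2)) :
    reduce (L ++ [x]) = L ++ [x] := by
  rw [reduce_eq_invRev_reduce_invRev, invRev_append_singleton]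
  have hred : reduce (invRev L) = invRev L := by rw [reduce_invRev, hL]
  rw [reduce_cons_of _ _ hred ?_, ← invRev_append_singleton, invRev_invRev]
  · intro p hp
    -- p is the head of invRev L, i.e. the flipped last element of L
    have : ∃ q ∈ L.getLast?, p = (q.1, !q.2) := by
      rcases List.eq_nil_or_concat' L with rfl | ⟨M, y, rfl⟩
      · simp [invRev] at hp
      · rw [invRev_append_singleton] at hp
        simp only [List.head?_cons, Option.mem_some_iff] at hp
        exact ⟨y, by simp, hp.symm⟩
    obtain ⟨q, hq, rfl⟩ := this
    have := h q hq
    rintro ⟨h1, h2⟩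
    simp only at h1 h2
    exact this ⟨h1.symm, by rw [h2]; cases x.2 <;> simp⟩

lemma eq_one_of_central {a b : β} (hab : a ≠ b) (z : FreeGroup β)
    (hz : ∀ g : FreeGroup β, g * z = z * g) : z = 1 := by
  by_contra h
  have hw : z.toWord ≠ [] := fun hh => h (toWord_eq_nil_iff.mp hh)
  obtain ⟨⟨c, ε⟩, w', hw'⟩ : ∃ x w', z.toWord = x :: w' := by
    cases hcw : z.toWord with
    | nil => exact absurd hcw hw
    | cons x w' => exact ⟨x, w', rfl⟩
  set s : β := if a = c then b else a with hs_def
  have hs : s ≠ c := by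
    by_cases hac : a = c
    · simpa [hs_def, hac] using fun hbc => hab (hac.trans hbc.symm)
    · simpa [hs_def, hac] using hac
  set d := z.toWord.getLast hw with hd_def
  set t : Bool := if d.1 = s then d.2 else true with ht_def
  have ht : ¬(d.1 = s ∧ d.2 = !t) := by
    rintro ⟨h1, h2⟩
    rw [ht_def] at h2
    simp [h1] at h2
  have h1 : (mk [(s, t)] * z).toWord = (s, t) :: z.toWord := by
    conv_lhs => rw [← mk_toWord (x := z)]
    rw [mul_mk]
    show reduce ((s,t) :: z.toWord) = _
    · rw [reduce_cons_of _ _ z.reduce_toWord]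
      intro p hp
      rw [hw'] at hp
      simp only [List.head?_cons, Option.mem_some_iff] at hp
      rintro ⟨hh, -⟩
      apply hs
      rw [← hp] at hh
      exact hh
  have h2 : (z * mk [(s, t)]).toWord = z.toWord ++ [(s, t)] := by
    conv_lhs => rw [← mk_toWord (x := z)]
    rw [mul_mk]
    show reduce (z.toWord ++ [(s,t)]) = _
    rw [reduce_concat_of _ _ z.reduce_toWord]
    intro p hp
    rw [List.getLast?_eq_getLast hw] at hp
    simp only [Option.mem_some_iff] at hp
    rw [← hp]
    exact ht
  rw [hz (mk [(s,t)])] at h1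
  rw [h2] at h1
  -- h1 : z.toWord ++ [(s,t)] = (s,t) :: z.toWord
  rw [hw'] at h1
  have : (c, ε) = (s, t) := by
    have := congrArg List.head? h1
    simpa using this
  exact hs (congrArg Prod.fst this).symm

lemma reduced_cons_replicate (hβ : ∀ a b : β, a = b) :
    ∀ (L : List (β × Bool)) (x : β × Bool), reduce (x :: L) = x :: L →
      x :: L = List.replicate (L.length + 1) x := by
  intro L
  induction L with
  | nil => intro x _; rfl
  | cons y L' ih =>
    intro x hx
    rw [reduce.cons] at hx
    rcases hr : reduce (y :: L') with _ | ⟨hd, tl⟩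
    · rw [hr] at hx
      have hx' : [x] = x :: y :: L' := hx
      simp at hx'
    · rw [hr] at hx
      have hx' : (if x.1 = hd.1 ∧ x.2 = !hd.2 then tl else x :: hd :: tl) = x :: y :: L' := hx
      by_cases hc : x.1 = hd.1 ∧ x.2 = !hd.2
      · rw [if_pos hc] at hx'
        have hlen := (reduce.red (L := y :: L')).length_le
        rw [hr] at hlen
        have := congrArg List.length hx'
        simp at this
        simp at hlen
        omega
      · rw [if_neg hc] at hx'
        have h1 : hd = y ∧ tl = L' := by
          have := hx'.symm
          simp at this
          exact ⟨this.1.symm, this.2.symm⟩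
        obtain ⟨rfl, rfl⟩ := h1
        have hxy : x = hd := by
          have hb : x.1 = hd.1 := hβ _ _
          have hno : ¬ x.2 = !hd.2 := fun hh => hc ⟨hb, hh⟩
          have hb2 : x.2 = hd.2 := by
            cases h2 : hd.2 <;> cases h3 : x.2 <;> simp_all
          exact Prod.ext hb hb2
        have := ih hd (by rw [hr])
        rw [List.length_cons, List.replicate_succ, hxy, this]

lemma invRev_replicate (n : ℕ) (s : β) (t : Bool) :
    invRev (List.replicate n (s, t)) = List.replicate n (s, !t) := by
  simp [invRev, List.map_replicate]

lemma mk_replicate_true (n : ℕ) (s : β) :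
    mk (List.replicate n (s, true)) = of s ^ n := by
  apply toWord_injective
  rw [toWord_of_pow, toWord_mk, reduce_replicate]

lemma mk_replicate_false (n : ℕ) (s : β) :
    mk (List.replicate n (s, false)) = (of s) ^ (-(n:ℤ)) := by
  rw [zpow_neg, zpow_natCast, ← mk_replicate_true, inv_mk, invRev_replicate]
  rfl

lemma zpow_structure (hβ : ∀ a b : β, a = b) (s : β) :
    ∀ z : FreeGroup β, ∃ k : ℤ, z = of s ^ k := by
  intro z
  rcases hw : z.toWord with _ | ⟨x, L⟩
  · exact ⟨0, by rw [zpow_zero]; exact toWord_eq_nil_iff.mp hw⟩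
  obtain ⟨s', t⟩ := x
  have hred : reduce ((s', t) :: L) = (s', t) :: L := by rw [← hw]; exact z.reduce_toWord
  have hrep := reduced_cons_replicate hβ L (s', t) hred
  have hz : z = mk (List.replicate (L.length + 1) (s', t)) := by
    rw [← hrep, ← hw, mk_toWord]
  have hss : s' = s := hβ _ _
  subst hss
  cases t
  · exact ⟨-((L.length + 1 : ℕ) : ℤ), by rw [hz, mk_replicate_false]⟩
  · exact ⟨((L.length + 1 : ℕ) : ℤ), by rw [hz, mk_replicate_true, zpow_natCast]⟩

lemma of_zpow_ne_one (s : β) {k : ℤ} (hk : k ≠ 0) : (of s : FreeGroup β) ^ k ≠ 1 := by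
  intro h
  apply hk
  have hn : norm ((of s : FreeGroup β) ^ k) = 0 := by rw [h]; exact FreeGroup.norm_one
  rcases k with n | n
  · simp only [Int.ofNat_eq_coe, zpow_natCast] at hn
    rw [norm_of_pow] at hn
    simpa using hn
  · rw [zpow_negSucc, norm_inv_eq, norm_of_pow] at hn
    omega

lemma base_eq_of_comm (h : ∀ u v : FreeGroup β, Commute u v) (a b : β) : a = b := by
  by_contra hab
  have hc := h (of a) (of b)
  have h2 : mk [(a, true), (b, true)] = mk [(b, true), (a, true)] := by
    have e1 : (of a : FreeGroup β) * of b = mk [(a, true), (b, true)] := by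
      rw [show (of a : FreeGroup β) = mk [(a,true)] from rfl,
        show (of b : FreeGroup β) = mk [(b,true)] from rfl, mul_mk]
      rfl
    have e2 : (of b : FreeGroup β) * of a = mk [(b, true), (a, true)] := by
      rw [show (of a : FreeGroup β) = mk [(a,true)] from rfl,
        show (of b : FreeGroup β) = mk [(b,true)] from rfl, mul_mk]
      rfl
    rw [← e1, ← e2]; exact hc
  have h3 := congrArg toWord h2
  rw [toWord_mk, toWord_mk, reduce_cons_of _ _ (reduce_singleton _) ?_,
    reduce_cons_of _ _ (reduce_singleton _) ?_] at h3
  · simp at h3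
    exact hab h3.1
  · intro p hp
    simp only [List.head?_cons, Option.mem_some_iff] at hp
    rintro ⟨h1, -⟩
    rw [← hp] at h1
    exact hab h1.symm
  · intro p hp
    simp only [List.head?_cons, Option.mem_some_iff] at hp
    rintro ⟨h1, -⟩
    rw [← hp] at h1
    exact hab h1

lemma comm_of_subsingleton (hβ : ∀ a b : β, a = b) (x y : FreeGroup β) : Commute x y := by
  induction x using FreeGroup.induction_on with
  | C1 => exact Commute.one_left y
  | of a =>
    induction y using FreeGroup.induction_on with
    | C1 => exact Commute.one_right _
    | of b => rw [hβ a b]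
    | inv_of b ih => exact ih.inv_right
    | mul y₁ y₂ ih1 ih2 => exact ih1.mul_right ih2
  | inv_of a ih => exact ih.inv_left
  | mul x₁ x₂ ih1 ih2 => exact ih1.mul_left ih2


variable {β : Type*}

/-- A free group with a nontrivial central element is commutative. -/
lemma comm_of_center {H : Type*} [Group H] [IsFreeGroup H] {z : H} (hz : z ≠ 1)
    (hc : ∀ g : H, g * z = z * g) (x y : H) : Commute x y := by
  classical
  set e := IsFreeGroup.toFreeGroup (G := H) with he
  by_cases hS : ∀ a b : IsFreeGroup.Generators H, a = b
  · have := comm_of_subsingleton hS (e x) (e y)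
    have h2 : e (x * y) = e (y * x) := by rw [_root_.map_mul, _root_.map_mul]; exact this
    exact e.injective h2
  · exfalso
    push_neg at hS
    obtain ⟨a, b, hab⟩ := hS
    apply hz
    have : e z = 1 := by
      apply eq_one_of_central hab
      intro g
      have := hc (e.symm g)
      have h2 := congrArg e this
      rw [_root_.map_mul, _root_.map_mul, MulEquiv.apply_symm_apply] at h2
      exact h2
    have := congrArg e.symm this
    rwa [MulEquiv.symm_apply_apply, _root_.map_one] at this

/-- Commutative transitivity in free groups. -/
lemma ct {α : Type*} {x y z : FreeGroup α} (hx : x ≠ 1) (hxy : Commute x y)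
    (hxz : Commute x z) : Commute y z := by
  set C := Subgroup.centralizer ({x} : Set (FreeGroup α)) with hC
  have mem : ∀ {w : FreeGroup α}, Commute x w → w ∈ C := by
    intro w hw
    rw [hC, Subgroup.mem_centralizer_iff]
    rintro g rfl
    exact hw.eq
  have hxC : x ∈ C := mem (Commute.refl x)
  have hyC : y ∈ C := mem hxy
  have hzC : z ∈ C := mem hxz
  have hne : (⟨x, hxC⟩ : C) ≠ 1 := fun h => hx (congrArg Subtype.val h)
  have hcen : ∀ g : C, g * ⟨x, hxC⟩ = ⟨x, hxC⟩ * g := by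
    rintro ⟨g, hg⟩
    apply Subtype.ext
    exact (Subgroup.mem_centralizer_iff.mp hg x (Set.mem_singleton x)).symm
  have := comm_of_center hne hcen ⟨y, hyC⟩ ⟨z, hzC⟩
  exact congrArg Subtype.val this

/-- The centralizer of a nontrivial element of a free group is infinite cyclic. -/
lemma exists_gen {α : Type*} {a : FreeGroup α} (ha : a ≠ 1) :
    ∃ g₀ : FreeGroup α, Commute a g₀ ∧ (∀ j : ℤ, g₀ ^ j = 1 → j = 0) ∧
      ∀ x : FreeGroup α, Commute a x → ∃ k : ℤ, x = g₀ ^ k := by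
  classical
  set C := Subgroup.centralizer ({a} : Set (FreeGroup α)) with hC
  have mem : ∀ {w : FreeGroup α}, Commute a w → w ∈ C := by
    intro w hw
    rw [hC, Subgroup.mem_centralizer_iff]
    rintro g rfl
    exact hw.eq
  have memc : ∀ {w : FreeGroup α}, w ∈ C → Commute a w := by
    intro w hw
    exact Subgroup.mem_centralizer_iff.mp hw a (Set.mem_singleton a)
  have haC : a ∈ C := mem (Commute.refl a)
  set e := IsFreeGroup.toFreeGroup (G := C) with he
  -- C is commutative
  have hcomm : ∀ u v : FreeGroup (IsFreeGroup.Generators C), Commute u v := by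
    intro u v
    have h1 : Commute ((e.symm u : C) : FreeGroup α) ((e.symm v : C) : FreeGroup α) :=
      ct ha (memc (e.symm u).2) (memc (e.symm v).2)
    have h2 : Commute (e.symm u) (e.symm v) := Subtype.ext h1.eq
    have h3 := congrArg e h2.eq
    rw [_root_.map_mul, _root_.map_mul, MulEquiv.apply_symm_apply,
      MulEquiv.apply_symm_apply] at h3
    exact h3
  have hS : ∀ s t : IsFreeGroup.Generators C, s = t := base_eq_of_comm hcomm
  -- a is nontrivial in C, giving a generator
  have haCne : (⟨a, haC⟩ : C) ≠ 1 := fun h => ha (congrArg Subtype.val h)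
  have heane : e ⟨a, haC⟩ ≠ 1 := fun h => haCne (by
    have := congrArg e.symm h
    rwa [MulEquiv.symm_apply_apply, _root_.map_one] at this)
  obtain ⟨s, -⟩ : ∃ s : IsFreeGroup.Generators C, True := by
    rcases hw : (e ⟨a, haC⟩).toWord with _ | ⟨⟨s, t⟩, L⟩
    · exact absurd (FreeGroup.toWord_eq_nil_iff.mp hw) heane
    · exact ⟨s, trivial⟩
  set g₀ : C := e.symm (FreeGroup.of s) with hg₀
  refine ⟨(g₀ : FreeGroup α), memc g₀.2, ?_, ?_⟩
  · intro j hj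
    have h1 : ((g₀ ^ j : C) : FreeGroup α) = 1 := by
      rw [SubgroupClass.coe_zpow]; exact hj
    have h2 : (g₀ ^ j : C) = 1 := Subtype.ext h1
    have h3 : (FreeGroup.of s : FreeGroup (IsFreeGroup.Generators C)) ^ j = 1 := by
      have := congrArg e h2
      rwa [map_zpow, MulEquiv.apply_symm_apply, _root_.map_one] at this
    by_contra hjne
    exact of_zpow_ne_one s hjne h3
  · intro x hx
    obtain ⟨k, hk⟩ := zpow_structure hS s (e ⟨x, mem hx⟩)
    refine ⟨k, ?_⟩
    have := congrArg e.symm hk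
    rw [MulEquiv.symm_apply_apply, map_zpow] at this
    have h2 := congrArg (Subtype.val : C → FreeGroup α) this
    rwa [SubgroupClass.coe_zpow] at h2

lemma zpow_ne_one {x : FreeGroup α} (hx : x ≠ 1) {j : ℤ} (hj : j ≠ 0) : x ^ j ≠ 1 := by
  obtain ⟨g₀, hcom, hinj, hgen⟩ := exists_gen hx
  obtain ⟨k, rfl⟩ := hgen x (Commute.refl x)
  have hk : k ≠ 0 := fun h => hx (by rw [h, zpow_zero])
  intro h
  rw [← zpow_mul] at h
  have := hinj _ h
  rcases mul_eq_zero.mp this with h' | h'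
  · exact absurd h' hk
  · exact hj h'

lemma commute_of_conj {a u : FreeGroup α} (ha : a ≠ 1)
    (h1 : Commute a (u * a * u⁻¹)) (h2 : Commute a (u⁻¹ * a * u)) : Commute u a := by
  obtain ⟨g₀, hcom, hinj, hgen⟩ := exists_gen ha
  have hg₀ : g₀ ≠ 1 := by
    intro h
    obtain ⟨k, hk⟩ := hgen a (Commute.refl a)
    exact ha (by rw [hk, h, one_zpow])
  have hcu : Commute a (u * g₀ * u⁻¹) := by
    have hconj : Commute (u * a * u⁻¹) (u * g₀ * u⁻¹) := by
      have := hcom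
      simpa using this.map (MulAut.conj u).toMonoidHom
    have hne : u * a * u⁻¹ ≠ 1 := by
      intro h
      apply ha
      have := congrArg (fun w => u⁻¹ * w * u) h
      simpa [mul_assoc] using this
    exact ct hne h1.symm hconj
  have hcu' : Commute a (u⁻¹ * g₀ * u) := by
    have hconj : Commute (u⁻¹ * a * u) (u⁻¹ * g₀ * u) := by
      have := hcom
      simpa using this.map (MulAut.conj u⁻¹).toMonoidHom
    have hne : u⁻¹ * a * u ≠ 1 := by
      intro h
      apply ha
      have := congrArg (fun w => u * w * u⁻¹) h
      simpa [mul_assoc] using this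
    exact ct hne h2.symm hconj
  obtain ⟨m, hm⟩ := hgen _ hcu
  obtain ⟨n, hn⟩ := hgen _ hcu'
  obtain ⟨k, hk⟩ := hgen a (Commute.refl a)
  have hmn : n * m = 1 := by
    have e1 : g₀ = u⁻¹ * (g₀ ^ m) * u := by rw [← hm]; group
    have e2 : u⁻¹ * (g₀ ^ m) * u = (u⁻¹ * g₀ * u) ^ m := by
      have := map_zpow (MulAut.conj u⁻¹).toMonoidHom g₀ m
      simpa [MulAut.conj_apply, mul_assoc] using this
    rw [hn] at e2
    have e3 : g₀ = g₀ ^ (n * m) := by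
      calc g₀ = u⁻¹ * g₀ ^ m * u := e1
        _ = (g₀ ^ n) ^ m := e2
        _ = g₀ ^ (n * m) := by rw [← zpow_mul]
    have e4 : g₀ ^ (n * m - 1) = 1 := by
      rw [zpow_sub, zpow_one, ← e3, mul_inv_cancel]
    have := hinj _ e4
    omega
  have hm1 : m = 1 ∨ m = -1 := by
    rcases Int.isUnit_iff.mp (IsUnit.of_mul_eq_one n (by rw [mul_comm]; exact hmn)) with h | h
    · exact Or.inl h
    · exact Or.inr h
  rcases hm1 with rfl | rfl
  · rw [zpow_one] at hm
    have hug : Commute u g₀ := by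
      have : u * g₀ * u⁻¹ = g₀ := hm
      have := congrArg (fun w => w * u) this
      have h' : u * g₀ = g₀ * u := by simpa [mul_assoc] using this
      exact h'
    rw [hk]
    exact hug.zpow_right k
  · exfalso
    rw [zpow_neg_one] at hm
    -- u g₀ u⁻¹ = g₀⁻¹, so u² commutes with g₀
    have hsq : (u * u) * g₀ * (u * u)⁻¹ = g₀ := by
      have h1' : u * g₀ * u⁻¹ = g₀⁻¹ := hm
      have h2' : u * g₀⁻¹ * u⁻¹ = g₀ := by
        have := congrArg (fun w => w⁻¹) h1'
        simpa [mul_assoc] using this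
      calc (u * u) * g₀ * (u * u)⁻¹ = u * (u * g₀ * u⁻¹) * u⁻¹ := by group
        _ = u * g₀⁻¹ * u⁻¹ := by rw [h1']
        _ = g₀ := h2'
    have husq : Commute (u * u) g₀ := by
      show (u * u) * g₀ = g₀ * (u * u)
      calc (u * u) * g₀ = (u * u) * g₀ * (u * u)⁻¹ * (u * u) := by group
        _ = g₀ * (u * u) := by rw [hsq]
    by_cases hu1 : u = 1
    · subst hu1
      have he : g₀⁻¹ = g₀ := by rw [← hm]; group
      have hgg : g₀ * g₀ = 1 := by
        nth_rewrite 1 [← he]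
        exact inv_mul_cancel g₀
      have := hinj 2 (by rw [zpow_two]; exact hgg)
      omega
    · have huu : u * u ≠ 1 := by
        have : u ^ (2:ℤ) = u * u := by rw [zpow_two]
        rw [← this]
        exact zpow_ne_one hu1 (by omega)
      have hug : Commute u g₀ :=
        ct huu ((Commute.refl u).mul_left (Commute.refl u)) husq
      have he : g₀⁻¹ = g₀ := by rw [← hm, hug.eq]; group
      have hgg : g₀ * g₀ = 1 := by
        nth_rewrite 1 [← he]
        exact inv_mul_cancel g₀
      have := hinj 2 (by rw [zpow_two]; exact hgg)
      omega


end FG8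

/-- If `G ≤ A₁ × A₂` and `f : G → F` is a homomorphism to a free group with
nonabelian image, then `f` factors through one of the coordinate projections:
`G ∩ ker p₁ ≤ ker f` or `G ∩ ker p₂ ≤ ker f`. -/
theorem stmt_8 {A₁ A₂ : Type*} [Group A₁] [Group A₂] (G : Subgroup (A₁ × A₂))
    {α : Type*} (f : G →* FreeGroup α)
    (hna : ¬ ∀ x ∈ f.range, ∀ y ∈ f.range, x * y = y * x) :
    ((MonoidHom.fst A₁ A₂).comp G.subtype).ker ≤ f.ker ∨
      ((MonoidHom.snd A₁ A₂).comp G.subtype).ker ≤ f.ker := by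
  classical
  by_contra hcon
  push_neg at hcon
  obtain ⟨h1, h2⟩ := hcon
  rw [SetLike.le_def] at h1 h2
  push_neg at h1 h2
  obtain ⟨x, hx, hfx⟩ := h1
  obtain ⟨y, hy, hfy⟩ := h2
  rw [MonoidHom.mem_ker] at hx hy
  rw [MonoidHom.mem_ker] at hfx hfy
  -- hx : ((x : A₁ × A₂)).1 = 1, via comp subtype
  have hx1 : (x : A₁ × A₂).1 = 1 := hx
  have hy2 : (y : A₁ × A₂).2 = 1 := hy
  set a := f x with hadef
  set b := f y with hbdef
  -- elements of the two kernels commute in G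
  have key : ∀ p q : G, (p : A₁ × A₂).1 = 1 → (q : A₁ × A₂).2 = 1 → Commute p q := by
    intro p q hp hq
    have : (p : A₁ × A₂) * (q : A₁ × A₂) = (q : A₁ × A₂) * (p : A₁ × A₂) := by
      apply Prod.ext
      · simp [Prod.fst_mul, hp]
      · simp [Prod.snd_mul, hq]
    exact Subtype.ext this
  have hab : Commute a b := (key x y hx1 hy2).map f
  have claim : ∀ g : G, Commute (f g) a := by
    intro g
    apply FG8.commute_of_conj hfx
    · -- Commute a (f g * a * (f g)⁻¹)
      have e1 : f g * a * (f g)⁻¹ = f (g * x * g⁻¹) := by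
        rw [map_mul, map_mul, map_inv]
      have m1 : Commute (f (g * x * g⁻¹)) b := by
        have hcomm : Commute (g * x * g⁻¹) y :=
          key _ _ (by simp [Prod.fst_mul, Prod.fst_inv, hx1]) hy2
        exact hcomm.map f
      rw [e1]
      exact FG8.ct hfy hab.symm m1.symm
    · have e1 : (f g)⁻¹ * a * f g = f (g⁻¹ * x * g) := by
        rw [map_mul, map_mul, map_inv]
      have m1 : Commute (f (g⁻¹ * x * g)) b := by
        have hcomm : Commute (g⁻¹ * x * g) y :=
          key _ _ (by simp [Prod.fst_mul, Prod.fst_inv, hx1]) hy2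
        exact hcomm.map f
      rw [e1]
      exact FG8.ct hfy hab.symm m1.symm
  apply hna
  rintro u ⟨g, rfl⟩ v ⟨h, rfl⟩
  exact (FG8.ct hfx (claim g).symm (claim h).symm).eq
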